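/- The σ-Gaussian smoothing of the square of ReLU is (relu²)_σ(x) = (1/4)(1 + erf(x/σ))(σ² + 2x²) + (σx/(2√π)) e^{−x²/σ²}. -/

import Mathlib

open MeasureTheory Real

noncomputable def gsmooth1 (g : ℝ → ℝ) (σ x : ℝ) : ℝ :=
  (1 / Real.sqrt Real.pi) * ∫ u : ℝ, g (x + σ * u) * Real.exp (-u ^ 2)

noncomputable def erf (z : ℝ) : ℝ :=
  2 / Real.sqrt Real.pi * ∫ t in (0 : ℝ)..z, Real.exp (-t ^ 2)

lemma hexp_int : Integrable (fun u : ℝ => Real.exp (-u ^ 2)) := by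
  simpa using integrable_exp_neg_mul_sq (one_pos)

lemma hmul_int : Integrable (fun u : ℝ => u * Real.exp (-u ^ 2)) := by
  simpa using integrable_mul_exp_neg_mul_sq (one_pos)

lemma hsq_int : Integrable (fun u : ℝ => u ^ 2 * Real.exp (-u ^ 2)) := by
  have hg : Integrable (fun u : ℝ => Real.exp (-(1/2) * u ^ 2)) :=
    integrable_exp_neg_mul_sq (by norm_num)
  refine hg.mono' ?_ ?_
  · exact (Continuous.mul (continuous_pow 2) ((continuous_pow 2).neg.rexp)).aestronglyMeasurable
  · filter_upwards with u
    have h1 : u ^ 2 ≤ Real.exp ((1/2) * u ^ 2) := by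
      have h2 : Real.exp ((1/2) * u ^ 2) = Real.exp (u ^ 2 / 4) * Real.exp (u ^ 2 / 4) := by
        rw [← Real.exp_add]; ring_nf
      nlinarith [Real.add_one_le_exp (u ^ 2 / 4), Real.exp_pos (u ^ 2 / 4),
        sq_nonneg (u ^ 2 / 4 - 1)]
    have h3 : Real.exp (-u ^ 2) = Real.exp (-(1/2) * u ^ 2) * Real.exp (-(1/2) * u ^ 2) := by
      rw [← Real.exp_add]; ring_nf
    have h4 : Real.exp ((1/2) * u ^ 2) * Real.exp (-(1/2) * u ^ 2) = 1 := by
      rw [← Real.exp_add]; simp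
    have h5 : 0 ≤ Real.exp (-(1/2) * u ^ 2) := (Real.exp_pos _).le
    rw [Real.norm_eq_abs, abs_of_nonneg (by positivity)]
    calc u ^ 2 * Real.exp (-u ^ 2)
        = (u ^ 2 * Real.exp (-(1/2) * u ^ 2)) * Real.exp (-(1/2) * u ^ 2) := by rw [h3]; ring
      _ ≤ 1 * Real.exp (-(1/2) * u ^ 2) := by
          refine mul_le_mul_of_nonneg_right ?_ h5
          nlinarith
      _ = Real.exp (-(1/2) * u ^ 2) := one_mul _

lemma tendsto_mul_exp : Filter.Tendsto (fun u : ℝ => u * Real.exp (-u ^ 2))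
    Filter.atTop (nhds 0) := by
  have hO := (rpow_mul_exp_neg_mul_sq_isLittleO_exp_neg one_pos 1).isBigO
  have hhalf : Filter.Tendsto (fun x : ℝ => (1/2 : ℝ) * x) Filter.atTop Filter.atTop :=
    Filter.tendsto_id.const_mul_atTop (by norm_num)
  have hg : Filter.Tendsto (fun x : ℝ => Real.exp (-(1/2) * x)) Filter.atTop (nhds 0) := by
    refine Real.tendsto_exp_atBot.comp ?_
    have := Filter.tendsto_neg_atTop_atBot.comp hhalf
    refine this.congr fun x => by simp only [Function.comp_def]; ring
  have := hO.trans_tendsto hg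
  refine this.congr fun x => by rw [Real.rpow_one, neg_one_mul]

lemma tendsto_exp_sq : Filter.Tendsto (fun u : ℝ => Real.exp (-u ^ 2))
    Filter.atTop (nhds 0) := by
  refine Real.tendsto_exp_atBot.comp ?_
  exact Filter.tendsto_neg_atTop_atBot.comp (Filter.tendsto_pow_atTop (two_ne_zero))

/-- the Gaussian smoothing of ReLU²:
`(relu²)_σ(x) = (1/4)(1 + erf(x/σ))(σ² + 2x²) + (σx/(2√π)) e^{−x²/σ²}`. -/
theorem gsmooth_relu_sq (σ : ℝ) (hσ : 0 < σ) (x : ℝ) :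
    gsmooth1 (fun y => (max y 0) ^ 2) σ x =
      1 / 4 * (1 + erf (x / σ)) * (σ ^ 2 + 2 * x ^ 2) +
        σ * x / (2 * Real.sqrt Real.pi) * Real.exp (-x ^ 2 / σ ^ 2) := by
  have hσ' : σ ≠ 0 := ne_of_gt hσ
  set a : ℝ := -x / σ with ha
  -- rewrite the integrand as an indicator
  have hind : (fun u : ℝ => (max (x + σ * u) 0) ^ 2 * Real.exp (-u ^ 2)) =
      Set.indicator (Set.Ici a) (fun u => (x + σ * u) ^ 2 * Real.exp (-u ^ 2)) := by
    funext u
    by_cases h : a ≤ u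
    · rw [Set.indicator_of_mem (show u ∈ Set.Ici a from h)]
      have : (0 : ℝ) ≤ x + σ * u := by
        rw [ha, div_le_iff₀ hσ] at h
        nlinarith
      rw [max_eq_left this]
    · rw [Set.indicator_of_notMem (show u ∉ Set.Ici a from h)]
      push_neg at h
      have : x + σ * u ≤ 0 := by
        rw [ha, lt_div_iff₀ hσ] at h
        nlinarith
      rw [max_eq_right this]
      ring
  -- the derivative lemma
  set F : ℝ → ℝ := fun u => -(σ * x + σ ^ 2 * u / 2) * Real.exp (-u ^ 2) with hF
  have hderiv : ∀ u : ℝ, HasDerivAt F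
      ((2 * σ * x * u + σ ^ 2 * u ^ 2 - σ ^ 2 / 2) * Real.exp (-u ^ 2)) u := by
    intro u
    have h1 : HasDerivAt (fun u : ℝ => -(σ * x + σ ^ 2 * u / 2)) (-(σ ^ 2 / 2)) u := by
      have h2 := (((hasDerivAt_id' (𝕜 := ℝ)) u).const_mul (σ ^ 2 / 2)).const_add (σ * x) |>.neg
      have heq : (fun u : ℝ => -(σ * x + σ ^ 2 * u / 2)) =
          (fun u : ℝ => -(σ * x + σ ^ 2 / 2 * u)) := by funext v; ring
      rw [heq]
      exact h2.congr_deriv (by ring)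
    have h2 : HasDerivAt (fun u : ℝ => Real.exp (-u ^ 2)) (Real.exp (-u ^ 2) * (-(2 * u))) u := by
      have := ((hasDerivAt_pow 2 u).neg).exp
      exact this.congr_deriv (by simp)
    have := h1.mul h2
    exact this.congr_deriv (by ring)
  -- integrability of the derivative
  have hhint : Integrable (fun u : ℝ =>
      (2 * σ * x * u + σ ^ 2 * u ^ 2 - σ ^ 2 / 2) * Real.exp (-u ^ 2)) := by
    have := ((hmul_int.const_mul (2 * σ * x)).add (hsq_int.const_mul (σ ^ 2))).sub
      (hexp_int.const_mul (σ ^ 2 / 2))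
    exact this.congr (Filter.Eventually.of_forall fun u => by simp only [Pi.add_apply, Pi.sub_apply]; ring)
  -- limit of F at infinity
  have hFtendsto : Filter.Tendsto F Filter.atTop (nhds 0) := by
    have := (tendsto_exp_sq.const_mul (-(σ * x))).add (tendsto_mul_exp.const_mul (-(σ ^ 2 / 2)))
    rw [show (-(σ * x)) * (0:ℝ) + (-(σ ^ 2 / 2)) * 0 = 0 by ring] at this
    refine this.congr fun u => ?_
    simp only [hF]; ring
  -- FTC on (a, ∞)
  have hFTC : ∫ u in Set.Ioi a,
      (2 * σ * x * u + σ ^ 2 * u ^ 2 - σ ^ 2 / 2) * Real.exp (-u ^ 2) = 0 - F a :=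
    integral_Ioi_of_hasDerivAt_of_tendsto' (fun u _ => hderiv u) hhint.integrableOn hFtendsto
  -- the Gaussian tail integral
  have hIic0 : ∫ u in Set.Iic (0:ℝ), Real.exp (-u ^ 2) = Real.sqrt Real.pi / 2 := by
    have := integral_comp_neg_Iic (0 : ℝ) (fun u => Real.exp (-u ^ 2))
    simp only [neg_sq, neg_zero] at this
    rw [this, ← integral_Ici_eq_integral_Ioi]
    have h2 := integral_gaussian_Ioi 1
    simp only [neg_one_mul, div_one] at h2
    rw [integral_Ici_eq_integral_Ioi, h2]
  have hIica : ∫ u in Set.Iic a, Real.exp (-u ^ 2) =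
      Real.sqrt Real.pi / 2 + ∫ t in (0:ℝ)..a, Real.exp (-t ^ 2) := by
    have := intervalIntegral.integral_Iic_sub_Iic (f := fun u : ℝ => Real.exp (-u ^ 2)) (μ := volume)
      (a := (0:ℝ)) (b := a) hexp_int.integrableOn hexp_int.integrableOn
    rw [hIic0] at this
    linarith [this]
  have h0a : ∫ t in (0:ℝ)..a, Real.exp (-t ^ 2) = -∫ t in (0:ℝ)..(x/σ), Real.exp (-t ^ 2) := by
    have := intervalIntegral.integral_comp_neg (a := (0:ℝ)) (b := x/σ)
      (fun t => Real.exp (-t ^ 2))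
    simp only [neg_sq, neg_zero] at this
    rw [this, ha, neg_div]
    rw [intervalIntegral.integral_symm]
  have hK : ∫ u in Set.Ioi a, Real.exp (-u ^ 2) =
      Real.sqrt Real.pi / 2 + ∫ t in (0:ℝ)..(x/σ), Real.exp (-t ^ 2) := by
    have htot : (∫ u in Set.Iic a, Real.exp (-u ^ 2)) + ∫ u in Set.Ioi a, Real.exp (-u ^ 2)
        = ∫ u : ℝ, Real.exp (-u ^ 2) :=
      intervalIntegral.integral_Iic_add_Ioi hexp_int.integrableOn hexp_int.integrableOn
    have hfull : ∫ u : ℝ, Real.exp (-u ^ 2) = Real.sqrt Real.pi := by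
      have := integral_gaussian 1
      simpa using this
    rw [hfull, hIica, h0a] at htot
    linarith
  -- split the main integral
  have hpoly : Integrable (fun u : ℝ => (x + σ * u) ^ 2 * Real.exp (-u ^ 2)) := by
    have := ((hexp_int.const_mul (x ^ 2)).add (hmul_int.const_mul (2 * x * σ))).add
      (hsq_int.const_mul (σ ^ 2))
    exact this.congr (Filter.Eventually.of_forall fun u => by simp only [Pi.add_apply, Pi.sub_apply]; ring)
  have hsplit : ∫ u in Set.Ioi a, (x + σ * u) ^ 2 * Real.exp (-u ^ 2) =
      (∫ u in Set.Ioi a, (2 * σ * x * u + σ ^ 2 * u ^ 2 - σ ^ 2 / 2) * Real.exp (-u ^ 2))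
      + (x ^ 2 + σ ^ 2 / 2) * ∫ u in Set.Ioi a, Real.exp (-u ^ 2) := by
    rw [← integral_const_mul, ← integral_add hhint.integrableOn
      ((hexp_int.const_mul (x ^ 2 + σ ^ 2 / 2)).integrableOn)]
    exact setIntegral_congr_fun measurableSet_Ioi fun u _ => by ring
  -- compute F a
  have hFa : F a = -(σ * x / 2) * Real.exp (-x ^ 2 / σ ^ 2) := by
    simp only [hF, ha]
    have h1 : -(-x / σ) ^ 2 = -x ^ 2 / σ ^ 2 := by field_simp
    rw [h1]
    have h2 : σ * x + σ ^ 2 * (-x / σ) / 2 = σ * x / 2 := by field_simp; ring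
    rw [h2]
  -- assemble
  rw [gsmooth1, hind, integral_indicator measurableSet_Ici,
    integral_Ici_eq_integral_Ioi, hsplit, hFTC, hFa, hK, erf]
  have hs : (0 : ℝ) < Real.sqrt Real.pi := Real.sqrt_pos.2 Real.pi_pos
  field_simp
  ring
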